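/- Let n ≥ 1, let 1 ≤ t ≤ 2n, and let x₁,…,x_t and y₁,…,y_t be row vectors in F₂^{2n} such that each of the families (x_i)_{i=1}^t and (y_i)_{i=1}^t is linearly independent and ⟨x_i, x_j⟩ₛ = ⟨y_i, y_j⟩ₛ for all 1 ≤ i, j ≤ t. Then there exist h₁,…,h_{2t} ∈ F₂^{2n} (some possibly zero) such that the matrix F = F_{h₁} F_{h₂} ⋯ F_{h_{2t}}, a product of at most 2t symplectic transvections and hence an element of Sp(2n, F₂), satisfies x_i F = y_i for all i = 1,…,t. -/

import Mathlib

open Matrix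

noncomputable section

/-- The symplectic form `Ω = [[0, I],[I, 0]]` over `F₂`. -/
def OmegaMat (n : ℕ) : Matrix (Fin n ⊕ Fin n) (Fin n ⊕ Fin n) (ZMod 2) :=
  Matrix.fromBlocks 0 1 1 0

/-- The symplectic transvection `F_h = I_{2n} + Ω hᵀ h` associated with `h ∈ F₂^{2n}`. -/
def sympTransvection (n : ℕ) (h : Fin n ⊕ Fin n → ZMod 2) :
    Matrix (Fin n ⊕ Fin n) (Fin n ⊕ Fin n) (ZMod 2) :=
  1 + OmegaMat n * Matrix.of (fun i j => h i * h j)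

/-- The symplectic inner product `⟨x, y⟩ₛ = x Ω yᵀ` on `F₂^{2n}`. -/
def sympInner (n : ℕ) (x y : Fin n ⊕ Fin n → ZMod 2) : ZMod 2 :=
  ∑ k, x k * Matrix.mulVec (OmegaMat n) y k

namespace SympAux

variable {n : ℕ}

abbrev V (n : ℕ) := Fin n ⊕ Fin n → ZMod 2

lemma zmod2_cases (a : ZMod 2) : a = 0 ∨ a = 1 := by
  have : ∀ b : ZMod 2, b = 0 ∨ b = 1 := by decide
  exact this a

lemma sympInner_def (x y : V n) : sympInner n x y = x ⬝ᵥ (OmegaMat n *ᵥ y) := rfl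

lemma mulVec_Omega_inl (y : V n) (a : Fin n) :
    (OmegaMat n *ᵥ y) (Sum.inl a) = y (Sum.inr a) := by
  simp [OmegaMat, Matrix.mulVec, dotProduct, Fintype.sum_sum_type, Matrix.one_apply]

lemma mulVec_Omega_inr (y : V n) (a : Fin n) :
    (OmegaMat n *ᵥ y) (Sum.inr a) = y (Sum.inl a) := by
  simp [OmegaMat, Matrix.mulVec, dotProduct, Fintype.sum_sum_type, Matrix.one_apply]

lemma sympInner_eq (x y : V n) :
    sympInner n x y = ∑ a, x (Sum.inl a) * y (Sum.inr a) + ∑ a, x (Sum.inr a) * y (Sum.inl a) := by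
  rw [sympInner, Fintype.sum_sum_type]
  simp [mulVec_Omega_inl, mulVec_Omega_inr]

lemma sympInner_comm (x y : V n) : sympInner n x y = sympInner n y x := by
  rw [sympInner_eq, sympInner_eq, add_comm]
  congr 1 <;> exact Finset.sum_congr rfl fun a _ => mul_comm _ _

lemma sympInner_self (x : V n) : sympInner n x x = 0 := by
  rw [sympInner_eq]
  have : ∑ a, x (Sum.inr a) * x (Sum.inl a) = ∑ a, x (Sum.inl a) * x (Sum.inr a) :=
    Finset.sum_congr rfl fun a _ => mul_comm _ _
  rw [this, CharTwo.add_self_eq_zero]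

/-- The symplectic form as a bilinear map. -/
def sympForm (n : ℕ) : V n →ₗ[ZMod 2] V n →ₗ[ZMod 2] ZMod 2 :=
  LinearMap.mk₂ (ZMod 2) (sympInner n)
    (fun x x' y => by simp [sympInner_def, add_dotProduct])
    (fun c x y => by simp [sympInner_def, smul_dotProduct])
    (fun x y y' => by simp [sympInner_def, Matrix.mulVec_add, dotProduct_add])
    (fun c x y => by simp [sympInner_def, Matrix.mulVec_smul, dotProduct_smul])

lemma sympForm_apply (x y : V n) : sympForm n x y = sympInner n x y := rfl

lemma sympInner_add_left (x y w : V n) :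
    sympInner n (x + y) w = sympInner n x w + sympInner n y w := by
  show sympForm n (x + y) w = _
  rw [map_add, LinearMap.add_apply]; rfl

lemma sympInner_add_right (x y w : V n) :
    sympInner n x (y + w) = sympInner n x y + sympInner n x w := by
  show sympForm n x (y + w) = _
  rw [map_add]; rfl

lemma sympInner_sum_left {ι : Type*} (s : Finset ι) (d : ι → ZMod 2) (f : ι → V n) (w : V n) :
    sympInner n (∑ j ∈ s, d j • f j) w = ∑ j ∈ s, d j * sympInner n (f j) w := by
  show sympForm n (∑ j ∈ s, d j • f j) w = _
  rw [map_sum, LinearMap.sum_apply]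
  exact Finset.sum_congr rfl fun j _ => by rw [_root_.map_smul, LinearMap.smul_apply, smul_eq_mul]; rfl

lemma eq_zero_of_sympInner_eq_zero (x : V n) (h : ∀ w, sympInner n x w = 0) : x = 0 := by
  funext k
  cases k with
  | inl a =>
    have := h (Pi.single (Sum.inr a) 1)
    simpa [sympInner_eq, Pi.single_apply] using this
  | inr a =>
    have := h (Pi.single (Sum.inl a) 1)
    simpa [sympInner_eq, Pi.single_apply] using this

/-- Extension: prescribe the symplectic pairings with an independent family. -/
lemma exists_pairing {m : ℕ} (v : Fin m → V n) (hv : LinearIndependent (ZMod 2) v)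
    (c : Fin m → ZMod 2) : ∃ w, ∀ k, sympInner n (v k) w = c k := by
  set L : V n →ₗ[ZMod 2] (Fin m → ZMod 2) := LinearMap.pi (fun k => sympForm n (v k)) with hL
  have hsurj : Function.Surjective L := by
    rw [← LinearMap.dualMap_injective_iff]
    refine (injective_iff_map_eq_zero _).mpr ?_
    intro φ hφ
    set a : Fin m → ZMod 2 := fun k => φ (fun j => if k = j then 1 else 0) with ha
    have hφ_eq : ∀ u : Fin m → ZMod 2, φ u = ∑ k, u k * a k := by
      intro u
      conv_lhs => rw [pi_eq_sum_univ u, map_sum]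
      exact Finset.sum_congr rfl fun k _ => by rw [_root_.map_smul, smul_eq_mul]
    have h0 : ∀ w, sympInner n (∑ k, a k • v k) w = 0 := by
      intro w
      have h1 : φ (L w) = 0 := by
        have := LinearMap.congr_fun hφ w
        simpa using this
      rw [hφ_eq (L w)] at h1
      rw [sympInner_sum_left]
      rw [← h1]
      refine Finset.sum_congr rfl fun k _ => ?_
      have : L w k = sympInner n (v k) w := rfl
      rw [this, mul_comm]
    have hz : (∑ k, a k • v k) = 0 := eq_zero_of_sympInner_eq_zero _ h0
    have hak : ∀ k, a k = 0 := fun k => linearIndependent_iff'.mp hv Finset.univ a hz k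
      (Finset.mem_univ k)
    refine LinearMap.ext fun u => ?_
    rw [hφ_eq u]
    simp [hak]
  obtain ⟨w, hw⟩ := hsurj c
  exact ⟨w, fun k => congrFun hw k⟩

lemma transpose_Omega : (OmegaMat n)ᵀ = OmegaMat n := by
  simp [OmegaMat, Matrix.fromBlocks_transpose]

lemma Omega_mul_Omega : OmegaMat n * OmegaMat n = 1 := by
  simp [OmegaMat, Matrix.fromBlocks_multiply, ← Matrix.fromBlocks_one]

lemma add_self_mat {I : Type*} (A : Matrix I I (ZMod 2)) : A + A = 0 := by
  ext i j
  rw [Matrix.add_apply, Matrix.zero_apply, CharTwo.add_self_eq_zero]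

lemma add_self_vec (a : V n) : a + a = 0 := by
  funext k
  rw [Pi.add_apply, Pi.zero_apply, CharTwo.add_self_eq_zero]

lemma vecMul_transvection (x h : V n) :
    Matrix.vecMul x (sympTransvection n h) = x + sympInner n x h • h := by
  rw [sympTransvection, Matrix.vecMul_add, Matrix.vecMul_one]
  congr 1
  rw [← Matrix.vecMul_vecMul]
  funext j
  show ∑ k, (Matrix.vecMul x (OmegaMat n)) k * (h k * h j) = _
  rw [Pi.smul_apply, smul_eq_mul, sympInner_def, dotProduct_mulVec]
  show _ = (∑ k, Matrix.vecMul x (OmegaMat n) k * h k) * h j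
  rw [Finset.sum_mul]
  exact Finset.sum_congr rfl fun k _ => by ring

lemma transvection_zero : sympTransvection n 0 = 1 := by
  have : Matrix.of (fun i j => (0 : V n) i * (0 : V n) j) =
      (0 : Matrix (Fin n ⊕ Fin n) (Fin n ⊕ Fin n) (ZMod 2)) := by
    ext i j; simp
  rw [sympTransvection, this, mul_zero, add_zero]

lemma vecMul_transvection_fix (x h : V n) (hxh : sympInner n x h = 0) :
    Matrix.vecMul x (sympTransvection n h) = x := by
  rw [vecMul_transvection, hxh, zero_smul, add_zero]

lemma transvection_symp (h : V n) :
    sympTransvection n h * OmegaMat n * (sympTransvection n h)ᵀ = OmegaMat n := by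
  set M : Matrix (Fin n ⊕ Fin n) (Fin n ⊕ Fin n) (ZMod 2) :=
    Matrix.of (fun i j => h i * h j) with hM
  have hMt : Mᵀ = M := by
    ext i j; simp [hM, mul_comm]
  have hOM : ∀ k j, (OmegaMat n * M) k j = (OmegaMat n *ᵥ h) k * h j := by
    intro k j
    rw [Matrix.mul_apply]
    show _ = (∑ l, OmegaMat n k l * h l) * h j
    rw [Finset.sum_mul]
    exact Finset.sum_congr rfl fun l _ => by simp [hM]; ring
  have hMOM : M * (OmegaMat n * M) = 0 := by
    ext i j
    rw [Matrix.mul_apply, Matrix.zero_apply]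
    have : ∑ k, M i k * (OmegaMat n * M) k j = (h i * h j) * sympInner n h h := by
      rw [sympInner, Finset.mul_sum]
      refine Finset.sum_congr rfl fun k _ => ?_
      rw [hOM]
      simp [hM]
      ring
    rw [this, sympInner_self, mul_zero]
  rw [sympTransvection, ← hM, Matrix.transpose_add, Matrix.transpose_one, Matrix.transpose_mul,
    hMt, transpose_Omega]
  have expand : (1 + OmegaMat n * M) * OmegaMat n * (1 + M * OmegaMat n)
      = OmegaMat n + (OmegaMat n * M * OmegaMat n + OmegaMat n * M * OmegaMat n)
        + OmegaMat n * (M * (OmegaMat n * M)) * OmegaMat n := by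
    noncomm_ring
  rw [expand, hMOM, mul_zero, zero_mul, add_zero, add_self_mat, add_zero]

lemma sympInner_vecMul (P : Matrix (Fin n ⊕ Fin n) (Fin n ⊕ Fin n) (ZMod 2))
    (hP : P * OmegaMat n * Pᵀ = OmegaMat n) (a b : V n) :
    sympInner n (Matrix.vecMul a P) (Matrix.vecMul b P) = sympInner n a b := by
  rw [sympInner_def, sympInner_def]
  rw [show Matrix.vecMul b P = Pᵀ *ᵥ b from (Matrix.mulVec_transpose P b).symm]
  rw [Matrix.mulVec_mulVec, dotProduct_mulVec, Matrix.vecMul_vecMul, ← Matrix.mul_assoc, hP,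
    ← dotProduct_mulVec]

lemma vecMul_linearIndependent (P : Matrix (Fin n ⊕ Fin n) (Fin n ⊕ Fin n) (ZMod 2))
    (hP : P * OmegaMat n * Pᵀ = OmegaMat n) {m : ℕ} (x : Fin m → V n)
    (hx : LinearIndependent (ZMod 2) x) :
    LinearIndependent (ZMod 2) (fun i => Matrix.vecMul (x i) P) := by
  have hPQ : P * (OmegaMat n * Pᵀ * OmegaMat n) = 1 := by
    rw [← Matrix.mul_assoc, ← Matrix.mul_assoc, hP, Omega_mul_Omega]
  have hinv : ∀ a : V n, Matrix.vecMul (Matrix.vecMul a P) (OmegaMat n * Pᵀ * OmegaMat n) = a := by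
    intro a
    rw [Matrix.vecMul_vecMul, hPQ, Matrix.vecMul_one]
  have hker : LinearMap.ker (Matrix.vecMulLinear P) = ⊥ := by
    rw [LinearMap.ker_eq_bot]
    intro a b hab
    simp only [Matrix.vecMulLinear_apply] at hab
    rw [← hinv a, ← hinv b, hab]
  exact hx.map' (Matrix.vecMulLinear P) hker

lemma list_symp (l : List (Matrix (Fin n ⊕ Fin n) (Fin n ⊕ Fin n) (ZMod 2)))
    (hl : ∀ A ∈ l, A * OmegaMat n * Aᵀ = OmegaMat n) :
    l.prod * OmegaMat n * l.prodᵀ = OmegaMat n := by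
  induction l with
  | nil => simp
  | cons A l IH =>
    rw [List.prod_cons, Matrix.transpose_mul]
    have h1 : A * l.prod * OmegaMat n * (l.prodᵀ * Aᵀ)
        = A * (l.prod * OmegaMat n * l.prodᵀ) * Aᵀ := by
      simp only [Matrix.mul_assoc]
    rw [h1, IH (fun B hB => hl B (List.mem_cons_of_mem _ hB))]
    exact hl A List.mem_cons_self
/-- Core two-transvection step: move `u` to `v` while fixing the `z j`. -/
lemma step {m : ℕ} (z : Fin m → V n) (u v : V n)
    (h1 : LinearIndependent (ZMod 2) (Fin.snoc z u : Fin (m + 1) → V n))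
    (h2 : LinearIndependent (ZMod 2) (Fin.snoc z v : Fin (m + 1) → V n))
    (hzip : ∀ j, sympInner n (z j) u = sympInner n (z j) v) :
    ∃ g₁ g₂ : V n,
      Matrix.vecMul (Matrix.vecMul u (sympTransvection n g₁)) (sympTransvection n g₂) = v ∧
      ∀ j, Matrix.vecMul (Matrix.vecMul (z j) (sympTransvection n g₁))
        (sympTransvection n g₂) = z j := by
  -- helper: once we have a good `w`, two transvections do the job
  have useW : ∀ w : V n, sympInner n u w = 1 → sympInner n v w = 1 →
      (∀ j, sympInner n (z j) w = sympInner n (z j) v) →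
      ∃ g₁ g₂ : V n,
        Matrix.vecMul (Matrix.vecMul u (sympTransvection n g₁)) (sympTransvection n g₂) = v ∧
        ∀ j, Matrix.vecMul (Matrix.vecMul (z j) (sympTransvection n g₁))
          (sympTransvection n g₂) = z j := by
    intro w hu1 hv1 hzw
    refine ⟨u + w, w + v, ?_, ?_⟩
    · have e1 : Matrix.vecMul u (sympTransvection n (u + w)) = w := by
        rw [vecMul_transvection, sympInner_add_right, sympInner_self, zero_add, hu1, one_smul,
          ← add_assoc, add_self_vec, zero_add]
      rw [e1, vecMul_transvection, sympInner_add_right, sympInner_self, zero_add,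
        sympInner_comm, hv1, one_smul, ← add_assoc, add_self_vec, zero_add]
    · intro j
      have ez1 : sympInner n (z j) (u + w) = 0 := by
        rw [sympInner_add_right, hzip j, hzw j, CharTwo.add_self_eq_zero]
      have ez2 : sympInner n (z j) (w + v) = 0 := by
        rw [sympInner_add_right, hzw j, CharTwo.add_self_eq_zero]
      rw [vecMul_transvection_fix _ _ ez1, vecMul_transvection_fix _ _ ez2]
  by_cases huv : u = v
  · refine ⟨0, 0, ?_, ?_⟩
    · rw [transvection_zero, Matrix.vecMul_one, Matrix.vecMul_one, huv]
    · intro j; rw [transvection_zero, Matrix.vecMul_one, Matrix.vecMul_one]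
  rcases zmod2_cases (sympInner n u v) with h0 | h1uv
  swap
  · -- ⟨u, v⟩ = 1 : one transvection suffices
    refine ⟨u + v, 0, ?_, ?_⟩
    · rw [transvection_zero, Matrix.vecMul_one, vecMul_transvection, sympInner_add_right,
        sympInner_self, zero_add, h1uv, one_smul, ← add_assoc, add_self_vec, zero_add]
    · intro j
      have ez : sympInner n (z j) (u + v) = 0 := by
        rw [sympInner_add_right, hzip j, CharTwo.add_self_eq_zero]
      rw [vecMul_transvection_fix _ _ ez, transvection_zero, Matrix.vecMul_one]
  -- ⟨u, v⟩ = 0, u ≠ v : need an auxiliary vector w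
  by_cases hvspan : v ∈ Submodule.span (ZMod 2) (Set.range (Fin.snoc z u : Fin (m + 1) → V n))
  · -- dependent case: u + v ∈ span z
    obtain ⟨c, hc⟩ := (Submodule.mem_span_range_iff_exists_fun (ZMod 2)).mp hvspan
    rw [Fin.sum_univ_castSucc] at hc
    simp only [Fin.snoc_castSucc, Fin.snoc_last] at hc
    rcases zmod2_cases (c (Fin.last m)) with hcl | hcl
    · exfalso
      rw [hcl, zero_smul, add_zero] at hc
      have hmem : v ∈ Submodule.span (ZMod 2) (Set.range z) := by
        rw [← hc]
        exact Submodule.sum_mem _ fun j _ => Submodule.smul_mem _ _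
          (Submodule.subset_span ⟨j, rfl⟩)
      exact (linearIndependent_fin_snoc.mp h2).2 hmem
    · rw [hcl, one_smul] at hc
      have hsum : u + v = ∑ j, c j.castSucc • z j := by
        calc u + v = u + (∑ j, c j.castSucc • z j + u) := by rw [hc]
          _ = ∑ j, c j.castSucc • z j + (u + u) := by abel
          _ = ∑ j, c j.castSucc • z j := by rw [add_self_vec, add_zero]
      obtain ⟨w, hw⟩ := exists_pairing _ h1 (Fin.snoc (fun j => sympInner n (z j) v) 1)
      have hu1 : sympInner n u w = 1 := by
        have := hw (Fin.last m)
        simp only [Fin.snoc_last] at this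
        exact this
      have hzw : ∀ j, sympInner n (z j) w = sympInner n (z j) v := by
        intro j
        have := hw j.castSucc
        simp only [Fin.snoc_castSucc] at this
        exact this
      have huvv : sympInner n (u + v) v = 0 := by
        rw [sympInner_add_left, h0, sympInner_self, add_zero]
      have huvw : sympInner n (u + v) w = 0 := by
        calc sympInner n (u + v) w = ∑ j, c j.castSucc * sympInner n (z j) w := by
              rw [hsum, sympInner_sum_left]
          _ = ∑ j, c j.castSucc * sympInner n (z j) v :=
              Finset.sum_congr rfl fun j _ => by rw [hzw j]
          _ = sympInner n (u + v) v := by rw [hsum, sympInner_sum_left]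
          _ = 0 := huvv
      have hv1 : sympInner n v w = 1 := by
        have h' : sympInner n u w + sympInner n v w = 0 := by
          rw [← sympInner_add_left]; exact huvw
        rw [hu1] at h'
        rcases zmod2_cases (sympInner n v w) with h'' | h''
        · rw [h''] at h'; exact absurd h' (by decide)
        · exact h''
      exact useW w hu1 hv1 hzw
  · -- independent case
    have h3 : LinearIndependent (ZMod 2)
        (Fin.snoc (Fin.snoc z u) v : Fin (m + 1 + 1) → V n) :=
      linearIndependent_fin_snoc.mpr ⟨h1, hvspan⟩
    obtain ⟨w, hw⟩ := exists_pairing _ h3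
      (Fin.snoc (Fin.snoc (fun j => sympInner n (z j) v) 1) 1)
    have hu1 : sympInner n u w = 1 := by
      have := hw ((Fin.last m).castSucc)
      simp only [Fin.snoc_castSucc, Fin.snoc_last] at this
      exact this
    have hv1 : sympInner n v w = 1 := by
      have := hw (Fin.last (m + 1))
      simp only [Fin.snoc_last] at this
      exact this
    have hzw : ∀ j, sympInner n (z j) w = sympInner n (z j) v := by
      intro j
      have := hw ((j.castSucc).castSucc)
      simp only [Fin.snoc_castSucc] at this
      exact this
    exact useW w hu1 hv1 hzw

lemma main_aux (t : ℕ) (x y : Fin t → V n)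
    (hx : LinearIndependent (ZMod 2) x) (hy : LinearIndependent (ZMod 2) y)
    (hip : ∀ i j, sympInner n (x i) (x j) = sympInner n (y i) (y j)) :
    ∃ h : Fin (2 * t) → V n,
      ∀ i, Matrix.vecMul (x i) (List.ofFn fun k => sympTransvection n (h k)).prod = y i := by
  induction t with
  | zero => exact ⟨fun _ => 0, fun i => i.elim0⟩
  | succ t IH =>
    obtain ⟨h₀, hh₀⟩ := IH (x ∘ Fin.castSucc) (y ∘ Fin.castSucc)
      (hx.comp _ (Fin.castSucc_injective t)) (hy.comp _ (Fin.castSucc_injective t))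
      (fun i j => hip _ _)
    set P := (List.ofFn fun k => sympTransvection n (h₀ k)).prod with hPdef
    have hPs : P * OmegaMat n * Pᵀ = OmegaMat n := by
      refine list_symp _ fun A hA => ?_
      rw [List.mem_ofFn] at hA
      obtain ⟨k, rfl⟩ := hA
      exact transvection_symp _
    set u := Matrix.vecMul (x (Fin.last t)) P with hu
    have hfam : (fun i : Fin (t + 1) => Matrix.vecMul (x i) P)
        = Fin.snoc (y ∘ Fin.castSucc) u := by
      funext i
      refine Fin.lastCases ?_ ?_ i
      · rw [Fin.snoc_last]
      · intro j
        rw [Fin.snoc_castSucc]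
        exact hh₀ j
    have hindep : LinearIndependent (ZMod 2)
        (Fin.snoc (y ∘ Fin.castSucc) u : Fin (t + 1) → V n) := by
      rw [← hfam]
      exact vecMul_linearIndependent P hPs x hx
    have hyfam : (Fin.snoc (y ∘ Fin.castSucc) (y (Fin.last t)) : Fin (t + 1) → V n) = y := by
      funext i
      refine Fin.lastCases ?_ ?_ i
      · rw [Fin.snoc_last]
      · intro j
        rw [Fin.snoc_castSucc]
        rfl
    have h2 : LinearIndependent (ZMod 2)
        (Fin.snoc (y ∘ Fin.castSucc) (y (Fin.last t)) : Fin (t + 1) → V n) := by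
      rw [hyfam]; exact hy
    have hzip : ∀ j : Fin t, sympInner n ((y ∘ Fin.castSucc) j) u
        = sympInner n ((y ∘ Fin.castSucc) j) (y (Fin.last t)) := by
      intro j
      have e1 : sympInner n ((y ∘ Fin.castSucc) j) u
          = sympInner n (x j.castSucc) (x (Fin.last t)) := by
        rw [show (y ∘ Fin.castSucc) j = Matrix.vecMul (x j.castSucc) P from (hh₀ j).symm, hu]
        exact sympInner_vecMul P hPs _ _
      rw [e1, hip j.castSucc (Fin.last t)]
      rfl
    obtain ⟨g₁, g₂, hg, hgz⟩ := step (y ∘ Fin.castSucc) u (y (Fin.last t)) hindep h2 hzip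
    refine ⟨Fin.snoc (Fin.snoc h₀ g₁) g₂, ?_⟩
    have hprod : (List.ofFn fun k : Fin (2 * t + 1 + 1) =>
          sympTransvection n ((Fin.snoc (Fin.snoc h₀ g₁) g₂ : Fin (2 * t + 1 + 1) → V n) k)).prod
        = P * sympTransvection n g₁ * sympTransvection n g₂ := by
      rw [List.ofFn_succ']
      simp only [Fin.snoc_castSucc, Fin.snoc_last]
      rw [List.ofFn_succ']
      simp only [Fin.snoc_castSucc, Fin.snoc_last]
      rw [List.prod_concat, List.prod_concat, hPdef]
    intro i
    show Matrix.vecMul (x i) (List.ofFn fun k : Fin (2 * t + 1 + 1) =>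
      sympTransvection n ((Fin.snoc (Fin.snoc h₀ g₁) g₂ : Fin (2 * t + 1 + 1) → V n) k)).prod = y i
    rw [hprod, ← Matrix.vecMul_vecMul, ← Matrix.vecMul_vecMul]
    refine Fin.lastCases ?_ ?_ i
    · rw [← hu]; exact hg
    · intro j
      rw [show Matrix.vecMul (x j.castSucc) P = (y ∘ Fin.castSucc) j from hh₀ j]
      exact hgz j

end SympAux

theorem symplectic_system_solution (n t : ℕ) (hn : 1 ≤ n) (ht : 1 ≤ t) (ht2 : t ≤ 2 * n)
    (x y : Fin t → Fin n ⊕ Fin n → ZMod 2)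
    (hx : LinearIndependent (ZMod 2) x)
    (hy : LinearIndependent (ZMod 2) y)
    (hip : ∀ i j, sympInner n (x i) (x j) = sympInner n (y i) (y j)) :
    ∃ h : Fin (2 * t) → Fin n ⊕ Fin n → ZMod 2,
      (List.ofFn fun k => sympTransvection n (h k)).prod * OmegaMat n *
          ((List.ofFn fun k => sympTransvection n (h k)).prod)ᵀ = OmegaMat n ∧
      ∀ i, Matrix.vecMul (x i) (List.ofFn fun k => sympTransvection n (h k)).prod = y i := by
  obtain ⟨h, hh⟩ := SympAux.main_aux t x y hx hy hip
  refine ⟨h, ?_, hh⟩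
  refine SympAux.list_symp _ fun A hA => ?_
  rw [List.mem_ofFn] at hA
  obtain ⟨k, rfl⟩ := hA
  exact SympAux.transvection_symp _

end
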